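/- Let q = p^m, let α₁,…,α_n ∈ F_q be distinct, β ∈ F_q nonzero, and let C be the set of vectors {(χ_β(f(α₁)),…,χ_β(f(α_n))) : f ∈ F(k,q)} where χ_β(α) = exp(2πi·Tr(βα)/p). Then |C| = p^r for some integer r, and p^n / q^{n−k} ≤ |C| ≤ min{p^n, q^k}. Moreover, both inequalities are equalities when k = n or q = p. -/

import Mathlib

open Polynomial

lemma expZMod_injective (p : ℕ) [Fact p.Prime] :
    Function.Injective
      (fun a : ZMod p => Complex.exp (2 * Real.pi * Complex.I * (a.val : ℂ) / p)) := by
  have hp : 1 < p := (Fact.out (p := p.Prime)).one_lt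
  haveI : NeZero p := ⟨by omega⟩
  intro a b h
  simp only [Complex.exp_eq_exp_iff_exists_int] at h
  obtain ⟨t, ht⟩ := h
  have hc : (2 * (Real.pi : ℂ) * Complex.I) ≠ 0 := by
    simp [Real.pi_ne_zero, Complex.I_ne_zero, Complex.ofReal_ne_zero]
  have hp0 : (p : ℂ) ≠ 0 := Nat.cast_ne_zero.mpr (by omega)
  have h3 : (2 * (Real.pi : ℂ) * Complex.I * (a.val : ℂ) / p) * p
      = (2 * (Real.pi : ℂ) * Complex.I * (b.val : ℂ) / p
          + t * (2 * (Real.pi : ℂ) * Complex.I)) * p := by rw [ht]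
  rw [div_mul_cancel₀ _ hp0, add_mul, div_mul_cancel₀ _ hp0] at h3
  have h2 : 2 * (Real.pi : ℂ) * Complex.I * (a.val : ℂ)
      = 2 * (Real.pi : ℂ) * Complex.I * ((b.val : ℂ) + t * p) := by rw [h3]; ring
  have h4 : (a.val : ℂ) = (b.val : ℂ) + t * p := mul_left_cancel₀ hc h2
  have h5 : (a.val : ℤ) = (b.val : ℤ) + t * p := by exact_mod_cast h4
  have hav : a.val < p := ZMod.val_lt a
  have hbv : b.val < p := ZMod.val_lt b
  have ht0 : t = 0 := by
    have h6 : t * (p : ℤ) = (a.val : ℤ) - b.val := by linarith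
    rcases lt_trichotomy t 0 with h | h | h
    · have : t * (p : ℤ) ≤ -p := by nlinarith
      rw [h6] at this; omega
    · exact h
    · have : (p : ℤ) ≤ t * p := by nlinarith
      rw [h6] at this; omega
  rw [ht0] at h5
  have : a.val = b.val := by omega
  exact ZMod.val_injective p this

/-- The CRS character vector `(χ_β(f(α₁)),…,χ_β(f(αₙ)))` of a polynomial `f`,
where `χ_β(a) = exp(2πi·Tr(βa)/p)` and `Tr : F_q → F_p` is the absolute trace. -/
noncomputable def crsVec (p : ℕ) [Fact p.Prime] (F : Type*) [Field F] [Fintype F]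
    [Algebra (ZMod p) F] {n : ℕ} (α : Fin n → F) (β : F) (f : Polynomial F) :
    Fin n → ℂ :=
  fun j => Complex.exp (2 * Real.pi * Complex.I *
    (((Algebra.trace (ZMod p) F (β * f.eval (α j))).val : ℂ)) / p)

/-- The size of the CRS code `C = {(χ_β(f(α₁)),…,χ_β(f(αₙ))) : deg f < k}` is a power
`p^r` of `p` satisfying `p^n / q^(n-k) ≤ |C| ≤ min (p^n) (q^k)` (stated
multiplicatively to avoid division), with both bounds attained when `k = n` or `q = p`. -/
theorem stmt4 (p m n k : ℕ) [Fact p.Prime] (hm : 0 < m)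
    (F : Type*) [Field F] [Fintype F] [Algebra (ZMod p) F]
    (hq : Fintype.card F = p ^ m)
    (hk : 1 ≤ k) (hkn : k ≤ n) (hnq : n < p ^ m)
    (α : Fin n → F) (hα : Function.Injective α) (β : F) (hβ : β ≠ 0) :
    ∃ r : ℕ,
      Set.ncard {v : Fin n → ℂ | ∃ f : Polynomial F, f.degree < (k : WithBot ℕ) ∧
        v = crsVec p F α β f} = p ^ r ∧
      p ^ n ≤ p ^ r * (p ^ m) ^ (n - k) ∧
      p ^ r ≤ min (p ^ n) ((p ^ m) ^ k) ∧
      ((k = n ∨ m = 1) →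
        p ^ n = p ^ r * (p ^ m) ^ (n - k) ∧ p ^ r = min (p ^ n) ((p ^ m) ^ k)) := by
  classical
  have hp : 1 < p := (Fact.out (p := p.Prime)).one_lt
  haveI : NeZero p := ⟨by omega⟩
  haveI : Module.Finite (ZMod p) F := Module.Finite.of_finite
  set S : F[X] → (Fin n → ZMod p) :=
    fun f j => Algebra.trace (ZMod p) F (β * f.eval (α j)) with hS
  have Sadd : ∀ f g : F[X], S (f + g) = S f + S g := by
    intro f g; funext j
    simp [hS, mul_add, map_add]
  have Sneg : ∀ f : F[X], S (-f) = - S f := by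
    intro f; funext j; simp [hS]
  set A : Set (Fin n → ZMod p) := S '' (degreeLT F k : Set F[X]) with hA
  set H : AddSubgroup (Fin n → ZMod p) :=
    { carrier := A
      zero_mem' := ⟨0, Submodule.zero_mem _, by funext j; simp [hS]⟩
      add_mem' := by
        rintro x y ⟨f, hf, rfl⟩ ⟨g, hg, rfl⟩
        exact ⟨f + g, Submodule.add_mem _ hf hg, Sadd f g⟩
      neg_mem' := by
        rintro x ⟨f, hf, rfl⟩
        exact ⟨-f, Submodule.neg_mem _ hf, Sneg f⟩ } with hH
  have hcardG : Nat.card (Fin n → ZMod p) = p ^ n := by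
    rw [Nat.card_fun]
    simp [Nat.card_zmod, Nat.card_eq_fintype_card]
  have hdvd : Nat.card H ∣ p ^ n := hcardG ▸ AddSubgroup.card_addSubgroup_dvd_card H
  obtain ⟨r, hrn, hr⟩ := (Nat.dvd_prime_pow (Fact.out (p := p.Prime))).mp hdvd
  have hAcard : A.ncard = p ^ r := by
    rw [← Nat.card_coe_set_eq]
    exact hr
  -- the exponential map
  set Emap : (Fin n → ZMod p) → (Fin n → ℂ) :=
    fun g j => Complex.exp (2 * Real.pi * Complex.I * ((g j).val : ℂ) / p) with hE
  have hEinj : Function.Injective Emap := by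
    intro x y hxy
    funext j
    exact expZMod_injective p (congrFun hxy j)
  have hCset : {v : Fin n → ℂ | ∃ f : Polynomial F, f.degree < (k : WithBot ℕ) ∧
      v = crsVec p F α β f} = Emap '' A := by
    ext v
    simp only [Set.mem_setOf_eq, hA, Set.mem_image]
    constructor
    · rintro ⟨f, hf, rfl⟩
      exact ⟨S f, ⟨f, Polynomial.mem_degreeLT.mpr hf, rfl⟩, rfl⟩
    · rintro ⟨g, ⟨f, hf, rfl⟩, rfl⟩
      exact ⟨f, Polynomial.mem_degreeLT.mp hf, rfl⟩
  have hC : Set.ncard {v : Fin n → ℂ | ∃ f : Polynomial F, f.degree < (k : WithBot ℕ) ∧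
      v = crsVec p F α β f} = p ^ r := by
    rw [hCset, Set.ncard_image_of_injective _ hEinj, hAcard]
  -- cardinalities of degreeLT sets
  have hfinLT : ∀ j : ℕ, (degreeLT F j : Set F[X]).Finite := fun j =>
    @Set.toFinite _ _ (Finite.of_equiv _ (degreeLTEquiv F j).toEquiv.symm)
  have hcardLT : ∀ j : ℕ, (degreeLT F j : Set F[X]).ncard = (p ^ m) ^ j := by
    intro j
    rw [← Nat.card_coe_set_eq]
    calc Nat.card (degreeLT F j) = Nat.card (Fin j → F) :=
          Nat.card_congr (degreeLTEquiv F j).toEquiv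
      _ = (p ^ m) ^ j := by
          rw [Nat.card_fun]
          simp [Nat.card_eq_fintype_card, hq]
  -- upper bounds
  have hup1 : p ^ r ≤ (p ^ m) ^ k := by
    have h1 : A.ncard ≤ (degreeLT F k : Set F[X]).ncard := Set.ncard_image_le (hfinLT k)
    rwa [hAcard, hcardLT k] at h1
  have hup2 : p ^ r ≤ p ^ n := Nat.pow_le_pow_right (by omega) hrn
  -- surjectivity of S on degreeLT F n
  have htr : Function.Surjective (Algebra.trace (ZMod p) F) :=
    Algebra.trace_surjective (ZMod p) F
  have hSsurj : ∀ t : Fin n → ZMod p, ∃ f ∈ degreeLT F n, S f = t := by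
    intro t
    choose c hc using fun j => htr (t j)
    set a : Fin n → F := fun j => β⁻¹ * c j with ha
    have hinj : Set.InjOn α (Finset.univ : Finset (Fin n)) := fun x _ y _ h => hα h
    refine ⟨Lagrange.interpolate Finset.univ α a, Polynomial.mem_degreeLT.mpr ?_, ?_⟩
    · have := Lagrange.degree_interpolate_lt a hinj
      simpa using this
    · funext j
      have he : Polynomial.eval (α j) (Lagrange.interpolate Finset.univ α a) = a j :=
        Lagrange.eval_interpolate_at_node a hinj (Finset.mem_univ j)
      simp only [hS, he, ha]
      rw [show Polynomial.eval (α j) (Lagrange.interpolate Finset.univ α fun j => β⁻¹ * c j) = β⁻¹ * c j from he,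
        mul_inv_cancel_left₀ hβ]
      exact hc j
  -- decomposition of polynomials of degree < n
  have hdecomp : ∀ f ∈ degreeLT F n, ∃ g ∈ degreeLT F k, ∃ h ∈ degreeLT F (n - k),
      f = g + X ^ k * h := by
    intro f hf
    refine ⟨f %ₘ X ^ k, ?_, f /ₘ X ^ k, ?_, ?_⟩
    · rw [Polynomial.mem_degreeLT]
      have := Polynomial.degree_modByMonic_lt f (Polynomial.monic_X_pow k)
      simpa [Polynomial.degree_X_pow] using this
    · rw [Polynomial.mem_degreeLT]
      by_cases h0 : f /ₘ X ^ k = 0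
      · rw [h0, Polynomial.degree_zero]
        exact WithBot.bot_lt_coe _
      · have hdegf : (k : WithBot ℕ) ≤ f.degree := by
          by_contra hlt
          push_neg at hlt
          exact h0 ((Polynomial.divByMonic_eq_zero_iff (Polynomial.monic_X_pow k)).mpr
            (by simpa [Polynomial.degree_X_pow] using hlt))
        have hf0 : f ≠ 0 := by
          rintro rfl
          rw [Polynomial.degree_zero] at hdegf
          exact absurd hdegf (not_le.mpr (WithBot.bot_lt_coe k))
        have h1 : f.natDegree < n := by
          have h2 := Polynomial.mem_degreeLT.mp hf
          rwa [Polynomial.degree_eq_natDegree hf0, Nat.cast_lt] at h2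
        have h2 : k ≤ f.natDegree := by
          rw [Polynomial.degree_eq_natDegree hf0] at hdegf
          exact_mod_cast hdegf
        have h3 : (f /ₘ X ^ k).natDegree = f.natDegree - k := by
          rw [Polynomial.natDegree_divByMonic f (Polynomial.monic_X_pow k),
            Polynomial.natDegree_X_pow]
        rw [Polynomial.degree_eq_natDegree h0, h3, Nat.cast_lt]
        omega
    · exact ((Polynomial.modByMonic_add_div f (X ^ k)).symm).trans rfl
  -- the shifted part
  set M : Set F[X] := (fun h => X ^ k * h) '' (degreeLT F (n - k) : Set F[X]) with hM
  set B : Set (Fin n → ZMod p) := S '' M with hB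
  have hBcard : B.ncard ≤ (p ^ m) ^ (n - k) := by
    calc B.ncard ≤ M.ncard := Set.ncard_image_le ((hfinLT (n - k)).image _)
      _ ≤ (degreeLT F (n - k) : Set F[X]).ncard := Set.ncard_image_le (hfinLT _)
      _ = (p ^ m) ^ (n - k) := hcardLT _
  have hcover : (Set.univ : Set (Fin n → ZMod p)) ⊆ Set.image2 (· + ·) A B := by
    intro t _
    obtain ⟨f, hf, rfl⟩ := hSsurj t
    obtain ⟨g, hg, h, hh, rfl⟩ := hdecomp f hf
    rw [Sadd]
    exact Set.mem_image2_of_mem ⟨g, hg, rfl⟩ ⟨X ^ k * h, ⟨h, hh, rfl⟩, rfl⟩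
  have hlow : p ^ n ≤ p ^ r * (p ^ m) ^ (n - k) := by
    have h1 : (Set.univ : Set (Fin n → ZMod p)).ncard ≤ (Set.image2 (· + ·) A B).ncard :=
      Set.ncard_le_ncard hcover (Set.toFinite _)
    have h2 : (Set.image2 (· + ·) A B).ncard ≤ (A ×ˢ B).ncard := by
      rw [← Set.image_prod]
      exact Set.ncard_image_le (Set.toFinite _)
    have h3 : (A ×ˢ B).ncard = A.ncard * B.ncard := by
      rw [← Nat.card_coe_set_eq, ← Nat.card_coe_set_eq, ← Nat.card_coe_set_eq,
        Nat.card_congr (Equiv.Set.prod A B), Nat.card_prod]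
    have h4 : (Set.univ : Set (Fin n → ZMod p)).ncard = p ^ n := by
      rw [Set.ncard_univ]; exact hcardG
    calc p ^ n = _ := h4.symm
      _ ≤ _ := h1
      _ ≤ _ := h2
      _ = A.ncard * B.ncard := h3
      _ ≤ p ^ r * (p ^ m) ^ (n - k) := by
          rw [hAcard]; exact Nat.mul_le_mul_left _ hBcard
  refine ⟨r, hC, hlow, le_min hup2 hup1, ?_⟩
  rintro (hkn' | hm1)
  · subst hkn'
    have h0 : k - k = 0 := by omega
    have hle : p ^ k ≤ p ^ r := by simpa [h0] using hlow
    have heq : p ^ r = p ^ k := le_antisymm hup2 hle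
    constructor
    · rw [h0, pow_zero, mul_one, heq]
    · rw [heq, min_eq_left]
      exact Nat.pow_le_pow_left (by
        calc p = p ^ 1 := (pow_one p).symm
          _ ≤ p ^ m := Nat.pow_le_pow_right (by omega) hm) k
  · subst hm1
    simp only [pow_one] at hlow hup1 ⊢
    have h1 : n ≤ r + (n - k) := by
      rw [← pow_add] at hlow
      exact (Nat.pow_le_pow_iff_right hp).mp hlow
    have h2 : r ≤ k := (Nat.pow_le_pow_iff_right hp).mp hup1
    have hrk : r = k := by omega
    subst hrk
    constructor
    · rw [← pow_add]; congr 1; omega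
    · rw [min_eq_right (Nat.pow_le_pow_right (by omega) hkn)]
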